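/- Let B be a symmetric positive definite n×n matrix, s ∈ ℝⁿ nonzero, and G symmetric positive definite with smallest eigenvalue ≥ θ_min > 0. Define u = Bs / √(sᵀBs). Then 1 - uᵀ(B+G)⁻¹u ≥ θ_min / (λ_max(B) + θ_min) > 0. -/

import Mathlib

open Matrix

private lemma quadConj {n : ℕ} (V : Matrix (Fin n) (Fin n) ℝ) (d x : Fin n → ℝ) :
    x ⬝ᵥ (V * diagonal d * Vᵀ) *ᵥ x = ∑ i, d i * ((Vᵀ *ᵥ x) i)^2 := by
  rw [← Matrix.mulVec_mulVec, ← Matrix.mulVec_mulVec, Matrix.dotProduct_mulVec,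
    ← Matrix.mulVec_transpose]
  simp only [dotProduct, Matrix.mulVec_diagonal]
  exact Finset.sum_congr rfl fun i _ => by ring

private lemma conjMul {n : ℕ} {V : Matrix (Fin n) (Fin n) ℝ} (hVtV : Vᵀ * V = 1)
    (f g : Fin n → ℝ) :
    (V * diagonal f * Vᵀ) * (V * diagonal g * Vᵀ) =
      V * diagonal (fun i => f i * g i) * Vᵀ := by
  have : (V * diagonal f * Vᵀ) * (V * diagonal g * Vᵀ)
      = V * (diagonal f * (Vᵀ * V) * diagonal g) * Vᵀ := by
    simp only [Matrix.mul_assoc]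
  rw [this, hVtV, Matrix.mul_one, Matrix.diagonal_mul_diagonal]

private lemma keyIneq {n : ℕ} (C : Matrix (Fin n) (Fin n) ℝ) (hC : C.PosDef) (x y : Fin n → ℝ) :
    2*(x ⬝ᵥ y) - y ⬝ᵥ C *ᵥ y ≤ x ⬝ᵥ C⁻¹ *ᵥ x := by
  have hU : IsUnit C.det := isUnit_iff_ne_zero.mpr hC.det_pos.ne'
  have hsym : Cᵀ = C := hC.1
  set r := C⁻¹ *ᵥ x with hrdef
  have hr : C *ᵥ r = x := by
    rw [hrdef, Matrix.mulVec_mulVec, Matrix.mul_nonsing_inv _ hU, Matrix.one_mulVec]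
  have h0 : 0 ≤ (y - r) ⬝ᵥ C *ᵥ (y - r) := by
    simpa using hC.posSemidef.dotProduct_mulVec_nonneg (y - r)
  have hcross : r ⬝ᵥ C *ᵥ y = x ⬝ᵥ y := by
    rw [Matrix.dotProduct_mulVec, ← hsym, Matrix.vecMul_transpose, hr]
  have hcross2 : y ⬝ᵥ C *ᵥ r = x ⬝ᵥ y := by rw [hr, dotProduct_comm]
  have hrr : r ⬝ᵥ C *ᵥ r = x ⬝ᵥ C⁻¹ *ᵥ x := by
    rw [hr, dotProduct_comm, hrdef]
  rw [sub_dotProduct, Matrix.mulVec_sub, dotProduct_sub,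
    dotProduct_sub, hcross, hcross2, hrr] at h0
  linarith

theorem shifted_quadratic_lower_bound {n : ℕ} (B G : Matrix (Fin n) (Fin n) ℝ)
    (hB : B.PosDef) (hG : G.IsHermitian) (θmin : ℝ) (hθ : 0 < θmin)
    (heig : ∀ i, θmin ≤ hG.eigenvalues i)
    (lamMax : ℝ) (hlam : IsGreatest (Set.range hB.1.eigenvalues) lamMax)
    (s : Fin n → ℝ) (hs : s ≠ 0) :
    θmin / (lamMax + θmin) ≤
      1 - ((Real.sqrt (s ⬝ᵥ B *ᵥ s))⁻¹ • (B *ᵥ s)) ⬝ᵥ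
            (B + G)⁻¹ *ᵥ ((Real.sqrt (s ⬝ᵥ B *ᵥ s))⁻¹ • (B *ᵥ s)) ∧
    0 < θmin / (lamMax + θmin) := by
  classical
  obtain ⟨j, hj⟩ := hlam.1
  have hlamPos : 0 < lamMax := hj ▸ hB.eigenvalues_pos j
  have hden : 0 < lamMax + θmin := by linarith
  refine ⟨?_, div_pos hθ hden⟩
  -- spectral data of B
  set V : Matrix (Fin n) (Fin n) ℝ := (hB.1.eigenvectorUnitary : Matrix (Fin n) (Fin n) ℝ)
    with hVdef
  set d : Fin n → ℝ := hB.1.eigenvalues with hddef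
  have hVVt : V * Vᵀ = 1 := by
    have := (Matrix.mem_unitaryGroup_iff).mp (hB.1.eigenvectorUnitary).2
    rwa [Matrix.star_eq_conjTranspose, Matrix.conjTranspose_eq_transpose_of_trivial] at this
  have hVtV : Vᵀ * V = 1 := by
    have := (Matrix.mem_unitaryGroup_iff').mp (hB.1.eigenvectorUnitary).2
    rwa [Matrix.star_eq_conjTranspose, Matrix.conjTranspose_eq_transpose_of_trivial] at this
  have hBspec : B = V * diagonal d * Vᵀ := by
    have := hB.1.spectral_theorem
    simpa [RCLike.ofReal_real_eq_id, Matrix.star_eq_conjTranspose] using this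
  have hdpos : ∀ i, 0 < d i := fun i => hB.eigenvalues_pos i
  have hdle : ∀ i, d i ≤ lamMax := fun i => hlam.2 ⟨i, rfl⟩
  have hdθ : ∀ i, 0 < d i + θmin := fun i => by have := hdpos i; linarith
  -- the shifted matrix C
  set C : Matrix (Fin n) (Fin n) ℝ := B + θmin • 1 with hCdef
  have hCspec : C = V * diagonal (fun i => d i + θmin) * Vᵀ := by
    have h1 : (diagonal (fun _ : Fin n => θmin) : Matrix (Fin n) (Fin n) ℝ)
        = θmin • 1 := (Matrix.smul_one_eq_diagonal θmin).symm
    rw [hCdef, hBspec, ← Matrix.diagonal_add, Matrix.mul_add, Matrix.add_mul, h1,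
      Matrix.mul_smul, Matrix.mul_one, Matrix.smul_mul, hVVt]
  have hCpos : C.PosDef := by
    refine hB.add_posSemidef ?_
    rw [Matrix.smul_one_eq_diagonal]
    exact Matrix.posSemidef_diagonal_iff.mpr fun i => hθ.le
  have hCinv : C⁻¹ = V * diagonal (fun i => (d i + θmin)⁻¹) * Vᵀ := by
    apply Matrix.inv_eq_right_inv
    rw [hCspec, conjMul hVtV]
    have : (fun i => (d i + θmin) * (d i + θmin)⁻¹) = fun _ => (1:ℝ) := by
      funext i; exact mul_inv_cancel₀ (hdθ i).ne'
    rw [this, Matrix.diagonal_one, Matrix.mul_one, hVVt]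
  have hBCB : B * C⁻¹ * B = V * diagonal (fun i => d i * (d i + θmin)⁻¹ * d i) * Vᵀ := by
    rw [hBspec, hCinv, conjMul hVtV, conjMul hVtV]
  -- G is bounded below by θmin
  have hGpsd : G.PosSemidef :=
    hG.posSemidef_iff_eigenvalues_nonneg.mpr fun i => le_trans hθ.le (heig i)
  have hA : (B + G).PosDef := hB.add_posSemidef hGpsd
  have hGlower : ∀ y : Fin n → ℝ, θmin * (y ⬝ᵥ y) ≤ y ⬝ᵥ G *ᵥ y := by
    intro y
    set W : Matrix (Fin n) (Fin n) ℝ := (hG.eigenvectorUnitary : Matrix (Fin n) (Fin n) ℝ)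
    have hWWt : W * Wᵀ = 1 := by
      have := (Matrix.mem_unitaryGroup_iff).mp (hG.eigenvectorUnitary).2
      rwa [Matrix.star_eq_conjTranspose, Matrix.conjTranspose_eq_transpose_of_trivial] at this
    have hGspec : G = W * diagonal hG.eigenvalues * Wᵀ := by
      have := hG.spectral_theorem
      simpa [RCLike.ofReal_real_eq_id, Matrix.star_eq_conjTranspose] using this
    have hyy : y ⬝ᵥ y = ∑ i, ((Wᵀ *ᵥ y) i)^2 := by
      have h1 : (Wᵀ *ᵥ y) ⬝ᵥ (Wᵀ *ᵥ y) = y ⬝ᵥ y := by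
        rw [Matrix.dotProduct_mulVec, Matrix.vecMul_transpose, Matrix.mulVec_mulVec, hWWt,
          Matrix.one_mulVec, dotProduct_comm]
      rw [← h1]
      simp [dotProduct, sq]
    conv_rhs => rw [hGspec]
    rw [quadConj, hyy, Finset.mul_sum]
    exact Finset.sum_le_sum fun i _ => by
      have h1 := heig i
      have h2 : (0:ℝ) ≤ ((Wᵀ *ᵥ y) i)^2 := sq_nonneg _
      nlinarith
  -- main chain
  have hsBs : 0 < s ⬝ᵥ B *ᵥ s := by simpa using hB.dotProduct_mulVec_pos hs
  set w : Fin n → ℝ := B *ᵥ s with hwdef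
  have hAdetU : IsUnit (B + G).det := isUnit_iff_ne_zero.mpr hA.det_pos.ne'
  set y : Fin n → ℝ := (B + G)⁻¹ *ᵥ w with hydef
  have hAy : (B + G) *ᵥ y = w := by
    rw [hydef, Matrix.mulVec_mulVec, Matrix.mul_nonsing_inv _ hAdetU, Matrix.one_mulVec]
  have hstep1 : w ⬝ᵥ (B + G)⁻¹ *ᵥ w = 2*(w ⬝ᵥ y) - y ⬝ᵥ (B + G) *ᵥ y := by
    have h1 : y ⬝ᵥ (B + G) *ᵥ y = w ⬝ᵥ y := by rw [hAy, dotProduct_comm]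
    have h2 : w ⬝ᵥ (B + G)⁻¹ *ᵥ w = w ⬝ᵥ y := by rw [hydef]
    rw [h1, h2]; ring
  have hstep2 : y ⬝ᵥ C *ᵥ y ≤ y ⬝ᵥ (B + G) *ᵥ y := by
    have h3 := hGlower y
    simp only [hCdef, Matrix.add_mulVec, dotProduct_add, Matrix.smul_mulVec,
      Matrix.one_mulVec, dotProduct_smul, smul_eq_mul]
    linarith
  have hchain : w ⬝ᵥ (B + G)⁻¹ *ᵥ w ≤ w ⬝ᵥ C⁻¹ *ᵥ w := by
    have := keyIneq C hCpos w y
    rw [hstep1]; linarith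
  -- spectral bound on w ⬝ᵥ C⁻¹ *ᵥ w
  have hBt : Bᵀ = B := hB.1
  have hwC : w ⬝ᵥ C⁻¹ *ᵥ w = s ⬝ᵥ (B * C⁻¹ * B) *ᵥ s := by
    have h1 : ∀ z, s ⬝ᵥ B *ᵥ z = w ⬝ᵥ z := fun z => by
      rw [Matrix.dotProduct_mulVec, hwdef, ← hBt, Matrix.vecMul_transpose, hBt]
    rw [← Matrix.mulVec_mulVec, ← Matrix.mulVec_mulVec, h1, ← hwdef]
  have hquad : s ⬝ᵥ (B * C⁻¹ * B) *ᵥ s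
      = ∑ i, (d i * (d i + θmin)⁻¹ * d i) * ((Vᵀ *ᵥ s) i)^2 := by
    rw [hBCB, quadConj]
  have hquadB : s ⬝ᵥ B *ᵥ s = ∑ i, d i * ((Vᵀ *ᵥ s) i)^2 := by
    conv_lhs => rw [hBspec]
    rw [quadConj]
  have hsum : s ⬝ᵥ (B * C⁻¹ * B) *ᵥ s ≤ lamMax / (lamMax + θmin) * (s ⬝ᵥ B *ᵥ s) := by
    rw [hquad, hquadB, Finset.mul_sum]
    refine Finset.sum_le_sum fun i _ => ?_
    have ht2 : (0:ℝ) ≤ ((Vᵀ *ᵥ s) i)^2 := sq_nonneg _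
    have h1 := hdpos i
    have h2 := hdle i
    have h3 := hdθ i
    rw [← mul_assoc]
    refine mul_le_mul_of_nonneg_right ?_ ht2
    have key : d i * (d i + θmin)⁻¹ * d i = d i ^ 2 / (d i + θmin) := by
      field_simp
    rw [key, div_mul_eq_mul_div, div_le_div_iff₀ h3 hden]
    nlinarith [mul_nonneg (mul_nonneg (sub_nonneg.mpr h2) h1.le) hθ.le]
  have hfin : w ⬝ᵥ (B + G)⁻¹ *ᵥ w ≤ lamMax / (lamMax + θmin) * (s ⬝ᵥ B *ᵥ s) := by
    calc w ⬝ᵥ (B + G)⁻¹ *ᵥ w ≤ w ⬝ᵥ C⁻¹ *ᵥ w := hchain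
      _ = s ⬝ᵥ (B * C⁻¹ * B) *ᵥ s := hwC
      _ ≤ lamMax / (lamMax + θmin) * (s ⬝ᵥ B *ᵥ s) := hsum
  -- assemble
  set c : ℝ := Real.sqrt (s ⬝ᵥ B *ᵥ s) with hcdef
  have hcpos : 0 < c := Real.sqrt_pos.mpr hsBs
  have hc2 : c * c = s ⬝ᵥ B *ᵥ s := Real.mul_self_sqrt hsBs.le
  have hLHS : ((c⁻¹ • w) ⬝ᵥ (B + G)⁻¹ *ᵥ (c⁻¹ • w)) = c⁻¹ * (c⁻¹ * (w ⬝ᵥ (B + G)⁻¹ *ᵥ w)) := by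
    rw [smul_dotProduct, Matrix.mulVec_smul, dotProduct_smul]
    simp [smul_eq_mul]
  have hfinal : (c⁻¹ • w) ⬝ᵥ (B + G)⁻¹ *ᵥ (c⁻¹ • w) ≤ lamMax / (lamMax + θmin) := by
    rw [hLHS]
    have hinv : (0:ℝ) ≤ c⁻¹ := (inv_pos.mpr hcpos).le
    calc c⁻¹ * (c⁻¹ * (w ⬝ᵥ (B + G)⁻¹ *ᵥ w))
        ≤ c⁻¹ * (c⁻¹ * (lamMax / (lamMax + θmin) * (s ⬝ᵥ B *ᵥ s))) := by
          exact mul_le_mul_of_nonneg_left (mul_le_mul_of_nonneg_left hfin hinv) hinv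
      _ = lamMax / (lamMax + θmin) := by
          rw [← hc2]
          field_simp
  have heq : θmin / (lamMax + θmin) = 1 - lamMax / (lamMax + θmin) := by
    field_simp
    ring
  rw [heq]
  linarith [hfinal]
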